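/- Let Γ be a semicomplete multipartite commutative weakly distance-regular digraph, and let x,y∈VΓ with y∉N⁺(x)∪N⁻(x). Then for every vertex w, w∈N⁺(x)∪N⁻(x) if and only if w∈N⁺(y)∪N⁻(y). Moreover, if ∂(x,y)≥3, then N⁺(x)=N⁺(y) and N⁻(x)=N⁻(y). -/

import Mathlib

open Set Matrix

namespace Paper

variable {V : Type*} {W : Type*}

/-- There is a directed walk of length `n` from `x` to `y` in the digraph with arc relation `A`. -/
def HasPathOfLength (A : V → V → Prop) (x y : V) (n : ℕ) : Prop :=
  ∃ p : ℕ → V, p 0 = x ∧ p n = y ∧ ∀ i < n, A (p i) (p (i + 1))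

/-- A digraph is strongly connected if there is a directed path between any two vertices. -/
def IsStronglyConnected (A : V → V → Prop) : Prop :=
  ∀ x y, ∃ n, HasPathOfLength A x y n

/-- The distance `∂(x,y)`: the length of a shortest directed path from `x` to `y`. -/
noncomputable def ddist (A : V → V → Prop) (x y : V) : ℕ :=
  sInf {n | HasPathOfLength A x y n}

/-- The two-way distance `∂̃(x,y) = (∂(x,y), ∂(y,x))`. -/
noncomputable def tdist (A : V → V → Prop) (x y : V) : ℕ × ℕ :=
  (ddist A x y, ddist A y x)

/-- The two-way distance set `∂̃(Γ)`. -/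
def tdistSet (A : V → V → Prop) : Set (ℕ × ℕ) :=
  {d | ∃ x y, tdist A x y = d}

/-- The number `p_{ĩ,j̃}(x,y) = |{z : ∂̃(x,z) = ĩ, ∂̃(z,y) = j̃}|`. -/
noncomputable def pnum (A : V → V → Prop) (i j : ℕ × ℕ) (x y : V) : ℕ :=
  {z | tdist A x z = i ∧ tdist A z y = j}.ncard

/-- A weakly distance-regular digraph. -/
def IsWDRD (A : V → V → Prop) : Prop :=
  IsStronglyConnected A ∧
  (∃ d ∈ tdistSet A, d.1 ≠ d.2) ∧
  ∀ i j : ℕ × ℕ, ∀ x y x' y' : V,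
    tdist A x y = tdist A x' y' → pnum A i j x y = pnum A i j x' y'

/-- Commutativity of the attached scheme: `p_{ĩ,j̃}^{h̃} = p_{j̃,ĩ}^{h̃}`. -/
def IsCommutativeDigraph (A : V → V → Prop) : Prop :=
  ∀ i j : ℕ × ℕ, ∀ x y : V, pnum A i j x y = pnum A j i x y

/-- A commutative weakly distance-regular digraph. -/
def IsCWDRD (A : V → V → Prop) : Prop :=
  IsWDRD A ∧ IsCommutativeDigraph A

/-- `A` is semicomplete multipartite with partition given by `f` (parts are the fibres). -/
def IsSemicompleteMultipartiteWith (A : V → V → Prop) {m : ℕ} (f : V → Fin m) : Prop :=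
  (∀ x, ¬ A x x) ∧ (∀ i, 2 ≤ {x | f x = i}.ncard) ∧
  ∀ x y : V, x ≠ y → ((A x y ∨ A y x) ↔ f x ≠ f y)

/-- A semicomplete multipartite digraph: the vertex set is partitioned into `m ≥ 2` partite
sets, each of size at least `2`, and two distinct vertices are joined by an arc in at least
one direction iff they lie in different partite sets. -/
def IsSemicompleteMultipartite (A : V → V → Prop) : Prop :=
  ∃ m : ℕ, 2 ≤ m ∧ ∃ f : V → Fin m, IsSemicompleteMultipartiteWith A f

/-- A semicomplete digraph: any two distinct vertices are joined by an arc in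
at least one direction. -/
def IsSemicomplete (A : V → V → Prop) : Prop :=
  (∀ x, ¬ A x x) ∧ ∀ x y : V, x ≠ y → A x y ∨ A y x

/-- A circuit of length `n`: a sequence `w₀,…,w_{n-1}` with consecutive arcs and an arc
from `w_{n-1}` back to `w₀`. -/
def HasCircuitOfLength (A : V → V → Prop) (n : ℕ) : Prop :=
  ∃ p : ℕ → V, p n = p 0 ∧ ∀ i < n, A (p i) (p (i + 1))

/-- The girth: the length of a shortest circuit. -/
noncomputable def girth (A : V → V → Prop) : ℕ :=
  sInf {n | 1 ≤ n ∧ HasCircuitOfLength A n}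

/-- Lexicographic product of digraphs. -/
def lexProd (A : V → V → Prop) (B : W → W → Prop) : V × W → V × W → Prop :=
  fun u v => A u.1 v.1 ∨ (u.1 = v.1 ∧ B u.2 v.2)

/-- The `n`-coclique extension of a digraph: `A ∘ K̄ₙ`. -/
def cocliqueExt (A : V → V → Prop) (n : ℕ) : V × Fin n → V × Fin n → Prop :=
  lexProd A (fun _ _ : Fin n => False)

/-- Isomorphism of digraphs. -/
def Iso (A : V → V → Prop) (B : W → W → Prop) : Prop :=
  ∃ e : V ≃ W, ∀ x y : V, A x y ↔ B (e x) (e y)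

/-- An `(m,r)`-team semicomplete multipartite digraph with partite sets the fibres of `f`:
`m ≥ 2` parts, each of size `r ≥ 2`. -/
def IsTeamSMD (A : V → V → Prop) {m : ℕ} (f : V → Fin m) (r : ℕ) : Prop :=
  2 ≤ m ∧ 2 ≤ r ∧ (∀ x, ¬ A x x) ∧ (∀ i : Fin m, {x | f x = i}.ncard = r) ∧
  ∀ x y : V, x ≠ y → ((A x y ∨ A y x) ↔ f x ≠ f y)

/-- Regular of valency `k`: every vertex has exactly `k` out-neighbours and `k`
in-neighbours. -/
def IsRegularOfValency (A : V → V → Prop) (k : ℕ) : Prop :=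
  ∀ x : V, {y | A x y}.ncard = k ∧ {y | A y x}.ncard = k

open Classical in
/-- Adjacency matrix of the symmetric part `EΓ`. -/
noncomputable def matE (A : V → V → Prop) : Matrix V V ℤ :=
  Matrix.of fun x y => if A x y ∧ A y x then 1 else 0

open Classical in
/-- Adjacency matrix of the asymmetric part `A⃗Γ`. -/
noncomputable def matAr (A : V → V → Prop) : Matrix V V ℤ :=
  Matrix.of fun x y => if A x y ∧ ¬ A y x then 1 else 0

open Classical in
/-- Adjacency matrix of a digraph. -/
noncomputable def matAdj (A : V → V → Prop) : Matrix V V ℤ :=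
  Matrix.of fun x y => if A x y then 1 else 0

/-- The all-ones matrix `J`. -/
def matJ (V : Type*) : Matrix V V ℤ := Matrix.of fun _ _ => 1

open Classical in
/-- The matrix equations in the definition of a doubly regular team semicomplete multipartite
digraph, with constants `t, αᵢ, βᵢ, γᵢ, ηᵢ` (`A₀ = matE A`, `A₁ = matAr A`). -/
def DRConstEq [Fintype V] (A : V → V → Prop) (t : ℤ) (α β γ η : ℕ → ℤ) : Prop :=
  ∀ i j : Fin 2,
    ![matE A, matAr A] i * ![matE A, matAr A] j =
      (if (i : ℕ) + (j : ℕ) = 0 then t else 0) • (1 : Matrix V V ℤ) +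
      α ((i : ℕ) + (j : ℕ)) • matAr A +
      β ((i : ℕ) + (j : ℕ)) • (matAr A)ᵀ +
      γ ((i : ℕ) + (j : ℕ)) • matE A +
      η ((i : ℕ) + (j : ℕ)) • (matJ V - 1 - matAr A - (matAr A)ᵀ - matE A)

/-- A doubly regular `(m,r)`-team semicomplete multipartite digraph. -/
def IsDoublyRegularTeamSMD [Fintype V] (A : V → V → Prop) {m : ℕ} (f : V → Fin m)
    (r : ℕ) : Prop :=
  IsTeamSMD A f r ∧ (∃ k, IsRegularOfValency A k) ∧
  ∃ t α β γ η, DRConstEq A t α β γ η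

/-- `A_j⁺(x)`: out-neighbours of `x` in the part `j` via single arcs. -/
def Aplus (A : V → V → Prop) {m : ℕ} (f : V → Fin m) (j : Fin m) (x : V) : Set V :=
  {y | f y = j ∧ A x y ∧ ¬ A y x}

/-- `E_j(x)`: neighbours of `x` in the part `j` via edges (pairs of opposite arcs). -/
def Epart (A : V → V → Prop) {m : ℕ} (f : V → Fin m) (j : Fin m) (x : V) : Set V :=
  {y | f y = j ∧ A x y ∧ A y x}

/-- Type I: `β₁+β₂-α₁-α₂ = r` and the digraph is an `r`-coclique extension of a
semicomplete digraph. -/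
def TypeI (A : V → V → Prop) (r : ℕ) (α β : ℕ → ℤ) : Prop :=
  β 1 + β 2 - α 1 - α 2 = (r : ℤ) ∧
  ∃ (N : ℕ) (S : Fin N → Fin N → Prop),
    1 ≤ N ∧ IsSemicomplete S ∧ Iso A (cocliqueExt S r)

/-- Type II: `β₁+β₂-α₁-α₂ = 0` and `c_{ij} = c_{ji} = (r - e_{ij})/2` for all pairs `i ≠ j`. -/
def TypeII (A : V → V → Prop) {m : ℕ} (f : V → Fin m) (r : ℕ) (α β : ℕ → ℤ) : Prop :=
  β 1 + β 2 - α 1 - α 2 = 0 ∧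
  ∀ i j : Fin m, i ≠ j → ∃ c e : ℕ,
    (∀ x, f x = i → (Aplus A f j x).ncard = c ∧ (Epart A f j x).ncard = e) ∧
    (∀ y, f y = j → (Aplus A f i y).ncard = c) ∧
    c + c + e = r

/-- Condition (ii) of Type III for the ordered pair `(i,j)`: `V_i` splits as
`V_i' ∪ V_i''` with `(V_i' × V_j) ∪ (V_j × V_i'') ⊆ A⃗Γ`. -/
def TypeIIIsplitB (A : V → V → Prop) {m : ℕ} (f : V → Fin m) (i j : Fin m) : Prop :=
  ∃ S : Set V, S ⊆ {x | f x = i} ∧ S.Nonempty ∧ ({x | f x = i} \ S).Nonempty ∧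
    (∀ x ∈ S, ∀ y : V, f y = j → A x y ∧ ¬ A y x) ∧
    (∀ y : V, f y = j → ∀ x ∈ {x | f x = i} \ S, A y x ∧ ¬ A x y)

/-- Condition (iii) of Type III for the pair `(i,j)`. -/
def TypeIIIsplitC (A : V → V → Prop) {m : ℕ} (f : V → Fin m) (i j : Fin m) : Prop :=
  ∃ S T' : Set V,
    S ⊆ {x | f x = i} ∧ S.Nonempty ∧ ({x | f x = i} \ S).Nonempty ∧
    T' ⊆ {y | f y = j} ∧ T'.Nonempty ∧ ({y | f y = j} \ T').Nonempty ∧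
    (∀ x ∈ S, ∀ y ∈ T', A x y ∧ A y x) ∧
    (∀ x ∈ {x | f x = i} \ S, ∀ y ∈ {y | f y = j} \ T', A x y ∧ A y x) ∧
    (∀ x ∈ S, ∀ y ∈ {y | f y = j} \ T', A x y ∧ ¬ A y x) ∧
    (∀ y ∈ T', ∀ x ∈ {x | f x = i} \ S, A y x ∧ ¬ A x y)

/-- Type III. -/
def TypeIII (A : V → V → Prop) {m : ℕ} (f : V → Fin m) (r : ℕ) (α β : ℕ → ℤ) : Prop :=
  2 * (β 1 + β 2 - α 1 - α 2) = (r : ℤ) ∧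
  ∀ i j : Fin m, i ≠ j →
    (∀ x y : V, f x = i → f y = j → A x y ∧ A y x) ∨
    (TypeIIIsplitB A f i j ∨ TypeIIIsplitB A f j i) ∨
    TypeIIIsplitC A f i j

/-- An `(m,r)`-team tournament: an `(m,r)`-team semicomplete multipartite digraph with
no pair of opposite arcs. -/
def IsTeamTournament (A : V → V → Prop) {m : ℕ} (f : V → Fin m) (r : ℕ) : Prop :=
  IsTeamSMD A f r ∧ ∀ x y : V, ¬ (A x y ∧ A y x)

open Classical in
/-- A doubly regular `(m,r)`-team tournament with parameters `(α,β,γ)`: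
`A² = αA + βAᵀ + γ(J - I - A - Aᵀ)`. -/
def IsDRTeamTournament [Fintype V] (A : V → V → Prop) {m : ℕ} (f : V → Fin m) (r : ℕ)
    (α β γ : ℤ) : Prop :=
  IsTeamTournament A f r ∧ (∃ k, IsRegularOfValency A k) ∧
  matAdj A * matAdj A =
    α • matAdj A + β • (matAdj A)ᵀ + γ • (matJ V - 1 - matAdj A - (matAdj A)ᵀ)

/-- Type II of a doubly regular team tournament: `β - α = 0`, `r` even, and
`|N⁺(x) ∩ V_i| = r/2` for every partite set `V_i` and vertex `x ∉ V_i`. -/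
def TournamentTypeII (A : V → V → Prop) {m : ℕ} (f : V → Fin m) (r : ℕ) (α β : ℤ) : Prop :=
  β = α ∧ Even r ∧ ∀ (i : Fin m) (x : V), f x ≠ i → 2 * {y | f y = i ∧ A x y}.ncard = r

/-- The Cayley digraph `Cay(ℤ₆, {1,2})`. -/
def Cay6 : ZMod 6 → ZMod 6 → Prop := fun x y => y - x = 1 ∨ y - x = 2

/-- The directed cycle `C₄`. -/
def C4 : ZMod 4 → ZMod 4 → Prop := fun x y => y = x + 1

section Aux

variable {V : Type*}

lemma ddist_self (A : V → V → Prop) (x : V) : ddist A x x = 0 := by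
  have h0 : HasPathOfLength A x x 0 :=
    ⟨fun _ => x, rfl, rfl, fun i hi => absurd hi (by omega)⟩
  exact Nat.sInf_eq_zero.mpr (Or.inl h0)

lemma ddist_eq_one_iff {A : V → V → Prop} (hA : ∀ v, ¬ A v v) (x w : V) :
    ddist A x w = 1 ↔ A x w := by
  constructor
  · intro h
    have hne : {n | HasPathOfLength A x w n}.Nonempty := by
      by_contra hc
      rw [Set.not_nonempty_iff_eq_empty] at hc
      rw [ddist, hc, Nat.sInf_empty] at h
      omega
    have hmem := Nat.sInf_mem hne
    rw [show sInf {n | HasPathOfLength A x w n} = ddist A x w from rfl, h] at hmem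
    obtain ⟨p, h0, h1, hstep⟩ := hmem
    have := hstep 0 (by omega)
    rwa [h0, h1] at this
  · intro h
    have h1 : HasPathOfLength A x w 1 := by
      refine ⟨fun i => if i = 0 then x else w, by simp, by simp, ?_⟩
      intro i hi
      interval_cases i
      simpa using h
    have hle : ddist A x w ≤ 1 := Nat.sInf_le h1
    have hne0 : ddist A x w ≠ 0 := by
      intro h0
      rcases Nat.sInf_eq_zero.mp h0 with h0' | h0'
      · obtain ⟨p, hp0, hp1, _⟩ := h0'
        rw [← hp0, hp1] at h
        exact hA w h
      · rw [Set.eq_empty_iff_forall_notMem] at h0'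
        exact h0' 1 h1
    omega

lemma ddist_le_two {A : V → V → Prop} {x z y : V} (h1 : A x z) (h2 : A z y) :
    ddist A x y ≤ 2 := by
  refine Nat.sInf_le ⟨fun i => if i = 0 then x else if i = 1 then z else y, by simp, by simp, ?_⟩
  intro i hi
  interval_cases i <;> simpa [h1, h2]

lemma tdist_swap (A : V → V → Prop) (x z : V) : tdist A z x = (tdist A x z).swap := rfl

open Classical in
lemma tdist_count [Fintype V] {A : V → V → Prop} (hw : IsWDRD A) (x y : V)
    (D : Set (ℕ × ℕ)) :
    {z | tdist A x z ∈ D}.ncard = {z | tdist A y z ∈ D}.ncard := by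
  classical
  have hkey : ∀ d : ℕ × ℕ, pnum A d d.swap x x = pnum A d d.swap y y := by
    intro d
    exact hw.2.2 d d.swap x x y y (by
      simp [tdist, ddist_self])
  have hfib : ∀ (u : V) (d : ℕ × ℕ),
      (Finset.univ.filter (fun z => tdist A u z = d)).card = pnum A d d.swap u u := by
    intro u d
    rw [pnum, ← Set.ncard_coe_finset]
    congr 1
    ext z
    simp only [Finset.coe_filter, Set.mem_setOf_eq, Finset.mem_univ, true_and]
    constructor
    · intro h
      exact ⟨h, by rw [tdist_swap, h]⟩
    · exact fun h => h.1
  set J : Finset (ℕ × ℕ) :=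
    (Finset.univ.image (tdist A x) ∪ Finset.univ.image (tdist A y)).filter (· ∈ D) with hJ
  have hn : ∀ (P : V → Prop), {z | P z}.ncard = (Finset.univ.filter P).card := by
    intro P
    rw [← Set.ncard_coe_finset]
    congr 1
    ext z
    simp
  have hcount : ∀ u : V,
      (∀ z : V, tdist A u z ∈ Finset.univ.image (tdist A x) ∪ Finset.univ.image (tdist A y)) →
      (Finset.univ.filter (fun z => tdist A u z ∈ D)).card
        = ∑ d ∈ J, (Finset.univ.filter (fun z => tdist A u z = d)).card := by
    intro u hu
    rw [Finset.card_eq_sum_card_fiberwise (f := tdist A u) (t := J)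
      (fun z hz => by
        simp only [Finset.mem_coe, Finset.mem_filter, Finset.mem_univ, true_and] at hz
        simp only [hJ, Finset.mem_coe, Finset.mem_filter]
        exact ⟨hu z, hz⟩)]
    refine Finset.sum_congr rfl ?_
    intro d hd
    simp only [hJ, Finset.mem_filter] at hd
    congr 1
    ext z
    simp only [Finset.mem_filter, Finset.mem_univ, true_and]
    constructor
    · exact fun h => h.2
    · intro h
      exact ⟨by rw [h]; exact hd.2, h⟩
  have hux : ∀ z : V, tdist A x z ∈ Finset.univ.image (tdist A x) ∪ Finset.univ.image (tdist A y) := by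
    intro z
    exact Finset.mem_union_left _ (Finset.mem_image_of_mem _ (Finset.mem_univ z))
  have huy : ∀ z : V, tdist A y z ∈ Finset.univ.image (tdist A x) ∪ Finset.univ.image (tdist A y) := by
    intro z
    exact Finset.mem_union_right _ (Finset.mem_image_of_mem _ (Finset.mem_univ z))
  rw [hn, hn, hcount x hux, hcount y huy]
  refine Finset.sum_congr rfl ?_
  intro d _
  rw [hfib, hfib, hkey]

end Aux

/-- if `y ∉ N⁺(x) ∪ N⁻(x)` then `w ∈ N⁺(x) ∪ N⁻(x) ↔ w ∈ N⁺(y) ∪ N⁻(y)`;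
moreover if `∂(x,y) ≥ 3` then `N⁺(x) = N⁺(y)` and `N⁻(x) = N⁻(y)`. -/
theorem statement_8 {V : Type*} [Fintype V] [Nonempty V] (A : V → V → Prop)
    (hsm : IsSemicompleteMultipartite A) (h : IsCWDRD A)
    (x y : V) (hxy : ¬ A x y ∧ ¬ A y x) :
    (∀ w : V, (A x w ∨ A w x) ↔ (A y w ∨ A w y)) ∧
    (3 ≤ ddist A x y → {w | A x w} = {w | A y w} ∧ {w | A w x} = {w | A w y}) := by
  classical
  obtain ⟨m, hm, f, hloop, hpart, hadj⟩ := hsm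
  by_cases hxeqy : x = y
  · subst hxeqy
    constructor
    · intro w; rfl
    · intro h3
      rw [ddist_self] at h3
      omega
  -- x ≠ y, so they lie in the same part
  have hf : f x = f y := by
    by_contra hfne
    rcases (hadj x y hxeqy).mpr hfne with h' | h'
    · exact hxy.1 h'
    · exact hxy.2 h'
  have main : ∀ w : V, (A x w ∨ A w x) ↔ (A y w ∨ A w y) := by
    intro w
    by_cases hwx : w = x
    · subst hwx
      constructor
      · intro hc
        rcases hc with hc | hc <;> exact absurd hc (hloop w)
      · intro hc
        rcases hc with hc | hc
        · exact absurd hc hxy.2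
        · exact absurd hc hxy.1
    by_cases hwy : w = y
    · subst hwy
      constructor
      · intro hc
        rcases hc with hc | hc
        · exact absurd hc hxy.1
        · exact absurd hc hxy.2
      · intro hc
        rcases hc with hc | hc <;> exact absurd hc (hloop w)
    constructor
    · intro hc
      refine (hadj y w (Ne.symm hwy)).mpr ?_
      rw [← hf]
      exact (hadj x w (Ne.symm hwx)).mp hc
    · intro hc
      refine (hadj x w (Ne.symm hwx)).mpr ?_
      rw [hf]
      exact (hadj y w (Ne.symm hwy)).mp hc
  refine ⟨main, ?_⟩
  intro h3
  -- neighbourhood subsets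
  have hsub1 : {w | A x w} ⊆ {w | A y w} := by
    intro w hw
    simp only [Set.mem_setOf_eq] at hw ⊢
    have hwy : w ≠ y := by
      rintro rfl
      exact hxy.1 hw
    have : A y w ∨ A w y := (main w).mp (Or.inl hw)
    rcases this with h' | h'
    · exact h'
    · exact absurd (ddist_le_two hw h') (by omega)
  have hsub2 : {w | A w y} ⊆ {w | A w x} := by
    intro w hw
    simp only [Set.mem_setOf_eq] at hw ⊢
    have hwx : w ≠ x := by
      rintro rfl
      exact hxy.1 hw
    have : A x w ∨ A w x := (main w).mpr (Or.inr hw)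
    rcases this with h' | h'
    · exact absurd (ddist_le_two h' hw) (by omega)
    · exact h'
  -- cardinality equalities from weak distance-regularity
  have hd1 : ∀ u : V, {w | A u w} = {z | tdist A u z ∈ {d : ℕ × ℕ | d.1 = 1}} := by
    intro u
    ext w
    simp only [Set.mem_setOf_eq, tdist]
    exact (ddist_eq_one_iff hloop u w).symm
  have hd2 : ∀ u : V, {w | A w u} = {z | tdist A u z ∈ {d : ℕ × ℕ | d.2 = 1}} := by
    intro u
    ext w
    simp only [Set.mem_setOf_eq, tdist]
    exact (ddist_eq_one_iff hloop w u).symm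
  have hc1 : {w | A x w}.ncard = {w | A y w}.ncard := by
    rw [hd1 x, hd1 y]
    exact tdist_count h.1 x y _
  have hc2 : {w | A w x}.ncard = {w | A w y}.ncard := by
    rw [hd2 x, hd2 y]
    exact tdist_count h.1 x y _
  constructor
  · exact Set.eq_of_subset_of_ncard_le hsub1 (le_of_eq hc1.symm) (Set.toFinite _)
  · exact (Set.eq_of_subset_of_ncard_le hsub2 (le_of_eq hc2) (Set.toFinite _)).symm

end Paper
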